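/- With A a rank-d set system on S and V = V(A) its generic representation, the power ideal I(V) is contained in the nonparking ideal J(A), i.e., every generator ℓ_H^{ρ_H} of I(V) lies in the ideal generated by the monomials x^q with q ∈ ℕ^d outside the parking polymatroid P(A). -/

import Mathlib

open Finset MvPolynomial
attribute [local instance] Classical.propDecidable

set_option maxHeartbeats 1000000
variable {S : Type*} [Fintype S] [DecidableEq S]

/-- `T` is a partial transversal of the set system `A = (A j : j ∈ [d])`:
its elements can be matched injectively to distinct members of `A` containing them. -/
def IsPT {d : ℕ} (A : Fin d → Finset S) (T : Finset S) : Prop :=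
  ∃ f : S → Fin d, Set.InjOn f ↑T ∧ ∀ s ∈ T, s ∈ A (f s)

/-- Rank function of the transversal matroid `M(A)`:
the maximum size of a partial transversal contained in `T`. -/
noncomputable def tRk {d : ℕ} (A : Fin d → Finset S) (T : Finset S) : ℕ :=
  (T.powerset.filter (IsPT A)).sup Finset.card

/-- Rank function of the dual matroid `M(A)*`: `rk*(T) = rk(S∖T) + |T| − rk(S)`. -/
noncomputable def dualRk {d : ℕ} (A : Fin d → Finset S) (T : Finset S) : ℕ :=
  tRk A Tᶜ + T.card - tRk A (univ : Finset S)

/-- Lattice points of the parking polymatroid `P(A)`. -/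
def inP {d : ℕ} (A : Fin d → Finset S) (q : Fin d →₀ ℕ) : Prop :=
  ∀ J : Finset (Fin d), ∑ j ∈ J, q j ≤ dualRk A (J.biUnion A)

/-- Rank function of the matroid of a vector configuration:
the columns `v_s` of the matrix `V`. -/
noncomputable def vRk {k : Type*} [Field k] {d : ℕ} (V : Matrix (Fin d) S k) (T : Finset S) : ℕ :=
  Module.finrank k (Submodule.span k ((fun s j => V j s) '' (T : Set S)))

/-- The power ideal `I(V)`, generated by `ℓ_H ^ ρ_H` over all hyperplanes `H` of `V`:
a hyperplane is cut out by a nonzero linear form `ℓ` such that the vectors it kills span a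
rank-`(d−1)` subspace, and `ρ_H` is the number of vectors of `V` outside `H`. -/
noncomputable def powerIdeal {k : Type*} [Field k] {d : ℕ} (V : Matrix (Fin d) S k) :
    Ideal (MvPolynomial (Fin d) k) :=
  Ideal.span { p | ∃ ℓ : Fin d → k, ℓ ≠ 0 ∧
    vRk V ((univ : Finset S).filter fun s => ∑ j, ℓ j * V j s = 0) = d - 1 ∧
    p = (∑ j, C (ℓ j) * X j) ^ (((univ : Finset S).filter fun s => ¬ (∑ j, ℓ j * V j s = 0)).card) }

/-- The nonparking ideal `J(A)`: generated by the monomials `x^q` with `q ∉ P(A)`. -/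
noncomputable def nonparkingIdeal (k : Type*) [Field k] {d : ℕ} (A : Fin d → Finset S) :
    Ideal (MvPolynomial (Fin d) k) :=
  Ideal.span { p | ∃ q : Fin d →₀ ℕ, ¬ inP A q ∧ p = monomial q (1 : k) }

/-- The power ideal of a generic representation of a rank-`d` transversal matroid is contained
in the nonparking ideal. -/
lemma core_aux {d : ℕ} (A : Fin d → Finset S) (V : Matrix (Fin d) S ℝ)
    (hz : ∀ j s, V j s = 0 ↔ s ∉ A j)
    (halg : AlgebraicIndependent ℚ
      (fun p : {p : Fin d × S // p.2 ∈ A p.1} => V p.1.1 p.1.2)) :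
    ∀ (n : ℕ) (C : Finset (Fin d)) (T : Finset S) (ℓ : Fin d → ℝ),
      C.card ≤ n → C.Nonempty → (∀ j ∈ C, ℓ j ≠ 0) →
      (∀ s ∈ T, ∑ j ∈ C, ℓ j * V j s = 0) →
      (∀ s ∈ T, ∃ j ∈ C, s ∈ A j) → T.card < C.card := by
  intro n
  induction n with
  | zero =>
    intro C T ℓ hCn hC _ _ _
    have := Finset.card_pos.mpr hC
    omega
  | succ n ih =>
    intro C T ℓ hCn hC hℓ hrel hpat
    by_contra hTC
    push_neg at hTC
    obtain ⟨T₀, hT₀T, hT₀card⟩ := Finset.exists_subset_card_eq hTC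
    have H := (Finset.all_card_le_biUnion_card_iff_existsInjective'
        (fun s : ↥T₀ => C.filter (fun j => ↑s ∈ A j)))
    by_cases hall : ∀ s' : Finset ↥T₀,
        s'.card ≤ (s'.biUnion fun s => C.filter (fun j => ↑s ∈ A j)).card
    · -- determinant contradiction
      obtain ⟨f, hfinj, hfmem⟩ := H.mp hall
      have hfC : ∀ s : ↥T₀, f s ∈ C := fun s => (Finset.mem_filter.mp (hfmem s)).1
      have hfA : ∀ s : ↥T₀, (s : S) ∈ A (f s) := fun s => (Finset.mem_filter.mp (hfmem s)).2
      have hcard : Fintype.card ↥C = Fintype.card ↥T₀ := by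
        rw [Fintype.card_coe, Fintype.card_coe, hT₀card]
      have e : ↥C ≃ ↥T₀ := Fintype.equivOfCardEq hcard
      set M : Matrix ↥C ↥C ℝ := fun i j => V ↑j ↑(e i) with hM
      have hdetM : M.det = 0 := by
        rw [← Matrix.exists_mulVec_eq_zero_iff]
        obtain ⟨j₀, hj₀⟩ := hC
        refine ⟨fun j => ℓ ↑j, ?_, ?_⟩
        · intro h
          exact hℓ j₀ hj₀ (congrFun h ⟨j₀, hj₀⟩)
        · funext i
          have : ∑ j ∈ C.attach, ℓ ↑j * V ↑j ↑(e i) = 0 := by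
            rw [Finset.sum_attach C (fun j => ℓ j * V j ↑(e i))]
            exact hrel _ (hT₀T (e i).2)
          simpa [Matrix.mulVec, hM, dotProduct, mul_comm] using this
      set N : Matrix ↥C ↥C (MvPolynomial {p : Fin d × S // p.2 ∈ A p.1} ℚ) :=
        fun i j => if h : (↑(e i) : S) ∈ A ↑j then X ⟨(↑j, ↑(e i)), h⟩ else 0 with hN
      have hmapN : N.map (aeval fun p : {p : Fin d × S // p.2 ∈ A p.1} => V p.1.1 p.1.2) = M := by
        funext i j
        rw [Matrix.map_apply]
        simp only [Matrix.map_apply, hN, hM]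
        split
        · next h => simp
        · next h => simp [(hz ↑j ↑(e i)).mpr h]
      have hdetN : N.det = 0 := by
        apply halg
        rw [show (0 : MvPolynomial {p : Fin d × S // p.2 ∈ A p.1} ℚ) = 0 from rfl]
        rw [map_zero]
        have := RingHom.map_det
          ((aeval fun p : {p : Fin d × S // p.2 ∈ A p.1} => V p.1.1 p.1.2) :
            MvPolynomial {p : Fin d × S // p.2 ∈ A p.1} ℚ →ₐ[ℚ] ℝ).toRingHom N
        simp only [AlgHom.toRingHom_eq_coe, RingHom.coe_coe] at this
        rw [show ((aeval fun p : {p : Fin d × S // p.2 ∈ A p.1} => V p.1.1 p.1.2))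
            N.det = (N.map (aeval fun p : {p : Fin d × S // p.2 ∈ A p.1} => V p.1.1 p.1.2)).det
          from this]
        rw [hmapN, hdetM]
      -- evaluation at 0/1 point
      have hginj : Function.Injective (fun i : ↥C => (⟨f (e i), hfC (e i)⟩ : ↥C)) := by
        intro i i' h
        apply e.injective
        apply hfinj
        exact Subtype.ext_iff.mp h
      have hgbij := (Finite.injective_iff_bijective).mp hginj
      set π : ↥C ≃ ↥C := Equiv.ofBijective _ hgbij with hπ
      have hπapp : ∀ i, (π i : Fin d) = f (e i) := fun i => rfl
      set w : {p : Fin d × S // p.2 ∈ A p.1} → ℚ :=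
        fun p => if h : p.1.2 ∈ T₀ then (if f ⟨p.1.2, h⟩ = p.1.1 then 1 else 0) else 0 with hw
      have hevalN : N.map (eval w) = (1 : Matrix ↥C ↥C ℚ).submatrix π id := by
        funext i j
        rw [Matrix.map_apply]
        simp only [Matrix.map_apply, Matrix.submatrix_apply, id_eq, Matrix.one_apply, hN]
        split
        · next h =>
          rw [eval_X]
          have h2 : (↑(e i) : S) ∈ T₀ := (e i).2
          have hwval : w ⟨(↑j, ↑(e i)), h⟩ = if f (e i) = ↑j then 1 else 0 := by
            simp only [hw]
            rw [dif_pos h2, Subtype.coe_eta]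
          rw [hwval]
          by_cases hfe : f (e i) = ↑j
          · rw [if_pos hfe, if_pos (Subtype.ext (by rw [hπapp i, hfe]))]
          · rw [if_neg hfe, if_neg (fun hc => hfe (by rw [← hπapp i, hc]))]
        · next h =>
          have hne : π i ≠ j := by
            intro hc
            apply h
            have hfj : f (e i) = ↑j := by rw [← hπapp i, hc]
            exact hfj ▸ hfA (e i)
          rw [if_neg hne, map_zero]
      have : (0 : ℚ) = (Equiv.Perm.sign π : ℤ) := by
        have h1 : eval w N.det = ((N.map (eval w)).det) := RingHom.map_det (eval w) N
        rw [hdetN, map_zero, hevalN, Matrix.det_permute π (1 : Matrix ↥C ↥C ℚ),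
          Matrix.det_one, mul_one] at h1
        exact_mod_cast h1
      rcases Int.units_eq_one_or (Equiv.Perm.sign π) with h | h <;> rw [h] at this <;>
        norm_num at this
    · push_neg at hall
      obtain ⟨s', hs'⟩ := hall
      set T' : Finset S := s'.image Subtype.val with hT'
      have hT'card : T'.card = s'.card := Finset.card_image_of_injective _ Subtype.val_injective
      set C' : Finset (Fin d) := T'.biUnion (fun s => C.filter (fun j => s ∈ A j)) with hC'
      have hC'eq : C' = s'.biUnion (fun s => C.filter (fun j => ↑s ∈ A j)) := by
        rw [hC', hT', Finset.image_biUnion]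
      have hC'C : C' ⊆ C := by
        intro j hj
        rw [hC'] at hj
        obtain ⟨s, _, hjs⟩ := Finset.mem_biUnion.mp hj
        exact (Finset.mem_filter.mp hjs).1
      have hC'T' : C'.card < T'.card := by rw [hC'eq, hT'card]; exact hs'
      have hT'T : T' ⊆ T := by
        intro s hs
        rw [hT'] at hs
        obtain ⟨s₀, _, rfl⟩ := Finset.mem_image.mp hs
        exact hT₀T s₀.2
      have hT'ne : T'.Nonempty := by
        rw [← Finset.card_pos]; omega
      have hC'ne : C'.Nonempty := by
        obtain ⟨s, hs⟩ := hT'ne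
        obtain ⟨j, hjC, hjA⟩ := hpat s (hT'T hs)
        exact ⟨j, Finset.mem_biUnion.mpr ⟨s, hs, Finset.mem_filter.mpr ⟨hjC, hjA⟩⟩⟩
      have hrec := ih C' T' ℓ (by
          have : C'.card < C.card := lt_of_lt_of_le hC'T' (by
            rw [hT'card]
            calc s'.card ≤ Fintype.card ↥T₀ := Finset.card_le_univ s'
            _ = T₀.card := Fintype.card_coe _
            _ = C.card := hT₀card)
          omega)
        hC'ne (fun j hj => hℓ j (hC'C hj))
        (by
          intro s hs
          rw [← hrel s (hT'T hs)]
          apply Finset.sum_subset hC'C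
          intro j hjC hjC'
          have : s ∉ A j := by
            intro hsA
            exact hjC' (Finset.mem_biUnion.mpr ⟨s, hs, Finset.mem_filter.mpr ⟨hjC, hsA⟩⟩)
          rw [(hz j s).mpr this, mul_zero])
        (by
          intro s hs
          obtain ⟨j, hjC, hjA⟩ := hpat s (hT'T hs)
          exact ⟨j, Finset.mem_biUnion.mpr ⟨s, hs, Finset.mem_filter.mpr ⟨hjC, hjA⟩⟩, hjA⟩)
      omega

theorem stmt6 {d : ℕ} (A : Fin d → Finset S) (hrank : tRk A (univ : Finset S) = d)
    (V : Matrix (Fin d) S ℝ) (hz : ∀ j s, V j s = 0 ↔ s ∉ A j)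
    (halg : AlgebraicIndependent ℚ
      (fun p : {p : Fin d × S // p.2 ∈ A p.1} => V p.1.1 p.1.2)) :
    powerIdeal V ≤ nonparkingIdeal ℝ A := by
  rw [powerIdeal, Ideal.span_le]
  rintro p ⟨ℓ, hℓ0, -, rfl⟩
  set ρ : ℕ := ((univ : Finset S).filter fun s => ¬ (∑ j, ℓ j * V j s = 0)).card with hρ
  set J₀ : Finset (Fin d) := univ.filter (fun j => ℓ j ≠ 0) with hJ₀def
  set U : Finset S := J₀.biUnion A with hUdef
  set Z : Finset S := univ.filter (fun s => ∑ j, ℓ j * V j s = 0) with hZdef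
  have hJ₀ne : J₀.Nonempty := by
    obtain ⟨j, hj⟩ := Function.ne_iff.mp hℓ0
    exact ⟨j, mem_filter.mpr ⟨mem_univ j, hj⟩⟩
  have f3 : (U ∩ Z).card < J₀.card := by
    refine core_aux A V hz halg J₀.card J₀ (U ∩ Z) ℓ le_rfl hJ₀ne ?_ ?_ ?_
    · intro j hj; exact (mem_filter.mp hj).2
    · intro s hs
      have hsZ := (mem_filter.mp (mem_inter.mp hs).2).2
      rw [← hsZ]
      apply Finset.sum_subset (subset_univ J₀)
      intro j _ hj
      have hℓj : ℓ j = 0 := by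
        by_contra hc; exact hj (mem_filter.mpr ⟨mem_univ j, hc⟩)
      rw [hℓj, zero_mul]
    · intro s hs
      exact mem_biUnion.mp (mem_inter.mp hs).1
  have f1 : tRk A Uᶜ + J₀.card ≤ d := by
    have hle : tRk A Uᶜ ≤ d - J₀.card := by
      apply Finset.sup_le
      intro T hT
      rw [mem_filter, mem_powerset] at hT
      obtain ⟨hTU, f, hfinj, hfmem⟩ := hT
      have himg : T.image f ⊆ univ \ J₀ := by
        intro j hj
        obtain ⟨s, hsT, rfl⟩ := mem_image.mp hj
        rw [mem_sdiff]
        refine ⟨mem_univ _, fun hjJ => ?_⟩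
        have hsU : s ∈ U := mem_biUnion.mpr ⟨f s, hjJ, hfmem s hsT⟩
        exact (mem_compl.mp (hTU hsT)) hsU
      calc T.card = (T.image f).card := (Finset.card_image_of_injOn hfinj).symm
        _ ≤ (univ \ J₀).card := card_le_card himg
        _ = d - J₀.card := by rw [card_sdiff_of_subset (subset_univ _), card_univ, Fintype.card_fin]
    have hJd : J₀.card ≤ d := by
      calc J₀.card ≤ (univ : Finset (Fin d)).card := card_le_card (subset_univ _)
        _ = d := by rw [card_univ, Fintype.card_fin]
    omega
  have f4 : J₀.card ≤ U.card := by
    have hdpos : 0 < d := hJ₀ne.choose.pos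
    have hne : ((univ : Finset S).powerset.filter (IsPT A)).Nonempty := by
      rw [Finset.nonempty_iff_ne_empty]
      intro h
      have hr2 := hrank
      rw [tRk, h, Finset.sup_empty] at hr2
      rw [show ((⊥ : ℕ) = 0) from rfl] at hr2
      omega
    obtain ⟨T, hTmem, hTsup⟩ := Finset.exists_mem_eq_sup _ hne Finset.card
    have hTcard : T.card = d := by rw [← hrank, tRk, hTsup]
    obtain ⟨-, f, hfinj, hfmem⟩ := mem_filter.mp hTmem
    have himgT : T.image f = univ := Finset.eq_univ_of_card _ (by
      rw [Finset.card_image_of_injOn hfinj, hTcard, Fintype.card_fin])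
    have himg : (T.filter (fun s => f s ∈ J₀)).image f = J₀ := by
      apply Finset.Subset.antisymm
      · intro j hj
        obtain ⟨s, hs, rfl⟩ := mem_image.mp hj
        exact (mem_filter.mp hs).2
      · intro j hj
        have : j ∈ T.image f := by rw [himgT]; exact mem_univ j
        obtain ⟨s, hsT, rfl⟩ := mem_image.mp this
        exact mem_image.mpr ⟨s, mem_filter.mpr ⟨hsT, hj⟩, rfl⟩
    have hT'U : T.filter (fun s => f s ∈ J₀) ⊆ U := by
      intro s hs
      obtain ⟨hsT, hfs⟩ := mem_filter.mp hs
      exact mem_biUnion.mpr ⟨f s, hfs, hfmem s hsT⟩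
    calc J₀.card = ((T.filter (fun s => f s ∈ J₀)).image f).card := by rw [himg]
      _ ≤ (T.filter (fun s => f s ∈ J₀)).card := Finset.card_image_le
      _ ≤ U.card := card_le_card hT'U
  have hnotU : ∀ s, s ∉ U → s ∈ Z := by
    intro s hs
    rw [hZdef, mem_filter]
    refine ⟨mem_univ s, ?_⟩
    apply Finset.sum_eq_zero
    intro j _
    by_cases hℓj : ℓ j = 0
    · rw [hℓj, zero_mul]
    · have : s ∉ A j := fun hsA =>
        hs (mem_biUnion.mpr ⟨j, mem_filter.mpr ⟨mem_univ j, hℓj⟩, hsA⟩)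
      rw [(hz j s).mpr this, mul_zero]
  have hUsdiff : U \ Z = (univ : Finset S).filter fun s => ¬ (∑ j, ℓ j * V j s = 0) := by
    ext s
    simp only [mem_sdiff, mem_filter, mem_univ, true_and, hZdef]
    constructor
    · rintro ⟨_, h2⟩; exact h2
    · intro h
      refine ⟨?_, h⟩
      by_contra hc
      have hsZ := hnotU s hc
      rw [hZdef, mem_filter] at hsZ
      exact h hsZ.2
  have f2 : U.card = (U ∩ Z).card + ρ := by
    rw [hρ, ← hUsdiff, Finset.card_inter_add_card_sdiff]
  -- homogeneity and vars
  have hhom : (∑ j, C (ℓ j) * X j : MvPolynomial (Fin d) ℝ).IsHomogeneous 1 := by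
    apply IsHomogeneous.sum
    intro j _
    have := (isHomogeneous_C (Fin d) (ℓ j)).mul (isHomogeneous_X ℝ j)
    simpa using this
  have hpow : ((∑ j, C (ℓ j) * X j : MvPolynomial (Fin d) ℝ) ^ ρ).IsHomogeneous ρ := by
    have := hhom.pow ρ
    simpa using this
  have hvars : ((∑ j, C (ℓ j) * X j : MvPolynomial (Fin d) ℝ) ^ ρ).vars ⊆ J₀ := by
    refine subset_trans (vars_pow _ _) (subset_trans (vars_sum_subset _ _) ?_)
    intro j' hj'
    obtain ⟨j, _, hj'mem⟩ := mem_biUnion.mp hj'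
    by_cases hℓj : ℓ j = 0
    · rw [hℓj] at hj'mem
      simp at hj'mem
    · have hXj : (C (ℓ j) * X j : MvPolynomial (Fin d) ℝ) = monomial (Finsupp.single j 1) (ℓ j) := by
        rw [X, C_mul_monomial, mul_one]
      rw [hXj, vars_monomial hℓj, Finsupp.support_single_ne_zero _ one_ne_zero] at hj'mem
      rw [Finset.mem_singleton] at hj'mem
      subst hj'mem
      exact mem_filter.mpr ⟨mem_univ _, hℓj⟩
  -- decompose into monomials
  rw [MvPolynomial.as_sum ((∑ j, C (ℓ j) * X j : MvPolynomial (Fin d) ℝ) ^ ρ)]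
  apply Ideal.sum_mem
  intro q hq
  have hqsupp : q.support ⊆ J₀ := by
    intro j hj
    exact hvars ((mem_vars j).mpr ⟨q, hq, hj⟩)
  have hqsum : ∑ j ∈ J₀, q j = ρ := by
    have hdeg : (Finsupp.weight 1) q = ρ := hpow (mem_support_iff.mp hq)
    rw [show (Finsupp.weight 1 : (Fin d →₀ ℕ) →+ ℕ) = Finsupp.weight (fun _ => 1) from rfl, ← Finsupp.degree_eq_weight_one] at hdeg
    rw [← hdeg, Finsupp.degree]
    exact (Finset.sum_subset hqsupp (fun j _ hj => Finsupp.notMem_support_iff.mp hj)).symm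
  have hnotin : ¬ inP A q := by
    intro hin
    have hle := hin J₀
    rw [hqsum] at hle
    rw [dualRk, hrank] at hle
    have : tRk A (J₀.biUnion A)ᶜ = tRk A Uᶜ := by rw [hUdef]
    rw [this] at hle
    have hUcard : (J₀.biUnion A).card = U.card := by rw [hUdef]
    rw [hUcard] at hle
    omega
  have hmon : (monomial q) (coeff q ((∑ j, C (ℓ j) * X j : MvPolynomial (Fin d) ℝ) ^ ρ))
      = C (coeff q ((∑ j, C (ℓ j) * X j : MvPolynomial (Fin d) ℝ) ^ ρ)) * monomial q 1 := by
    rw [C_mul_monomial, mul_one]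
  rw [hmon]
  exact Ideal.mul_mem_left _ _ (Ideal.subset_span ⟨q, hnotin, rfl⟩)
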